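/- For a distributive lattice L, the set M₃[L] of balanced triples in L³ is closed under componentwise meets: if (a,b,c) and (a',b',c') are balanced, then (a∧a', b∧b', c∧c') is balanced. -/
import Mathlib

/-- A triple `(a,b,c)` in a lattice is balanced if `a ⊓ b = a ⊓ c = b ⊓ c`. -/
def IsBalanced3 {L : Type*} [Lattice L] (t : L × L × L) : Prop :=
  t.1 ⊓ t.2.1 = t.1 ⊓ t.2.2 ∧ t.1 ⊓ t.2.2 = t.2.1 ⊓ t.2.2

theorem stmt2 {L : Type*} [DistribLattice L] (a b c a' b' c' : L)
    (h : IsBalanced3 (a, b, c)) (h' : IsBalanced3 (a', b', c')) :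
    IsBalanced3 (a ⊓ a', b ⊓ b', c ⊓ c') := by
  obtain ⟨h1, h2⟩ := h
  obtain ⟨h1', h2'⟩ := h'
  simp only [IsBalanced3] at *
  constructor
  · calc a ⊓ a' ⊓ (b ⊓ b') = (a ⊓ b) ⊓ (a' ⊓ b') := by ac_rfl
      _ = (a ⊓ c) ⊓ (a' ⊓ c') := by rw [h1, h1']
      _ = a ⊓ a' ⊓ (c ⊓ c') := by ac_rfl
  · calc a ⊓ a' ⊓ (c ⊓ c') = (a ⊓ c) ⊓ (a' ⊓ c') := by ac_rfl
      _ = (b ⊓ c) ⊓ (b' ⊓ c') := by rw [h2, h2']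
      _ = b ⊓ b' ⊓ (c ⊓ c') := by ac_rfl
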